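/- Let 0 < α < 2, M ≥ 0, C ≥ 0 and 0 < D < 1. Let g : ℝ → ℝ be a function with |g(z)| ≤ M for all z ∈ ℝ. Let (E_k)_{k≥1} be an i.i.d. sequence of exponential random variables with mean one and Γ_k = E_1 + ⋯ + E_k. Let (Z_{k,j})_{k≥1, j∈ℤ∖{0}} be arbitrary real random variables on the same probability space, and let (c_j)_{j∈ℤ} be real numbers with |c_j| ≤ C·D^{|j|} for all j. Then, almost surely, ∑_{k=1}^∞ ∑_{j≠0} |c_j · (Γ_k^{−1/α} − k^{−1/α}) · g(Z_{k,j})| < ∞. -/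

import Mathlib

open MeasureTheory ProbabilityTheory Filter Real
open scoped ENNReal NNReal


lemma aexp_le_inv {y : ℝ} (hy : y < 1) : Real.exp y ≤ (1 - y)⁻¹ := by
  have h := Real.add_one_le_exp (-y)
  have h1 : 0 < 1 - y := by linarith
  rw [Real.exp_neg] at h
  rw [inv_eq_one_div, le_div_iff₀ h1]
  calc Real.exp y * (1 - y) ≤ Real.exp y * (Real.exp y)⁻¹ :=
        mul_le_mul_of_nonneg_left (by linarith) (Real.exp_pos _).le
    _ = 1 := mul_inv_cancel₀ (Real.exp_pos _).ne'

lemma aupper {t : ℝ} (h0 : 0 ≤ t) (h2 : t ≤ 1/2) : (1 - t)⁻¹ ≤ Real.exp (t + 2*t^2) := by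
  set y := t + 2*t^2 with hy
  have h1 : 0 < 1 - t := by linarith
  have hy0 : 0 ≤ y := by positivity
  have h5 : y/2 + 1 ≤ Real.exp (y/2) := Real.add_one_le_exp _
  have h6 : (y/2 + 1)^2 ≤ Real.exp y := by
    calc (y/2 + 1)^2 ≤ (Real.exp (y/2))^2 := by
          apply pow_le_pow_left₀ (by positivity) h5
      _ = Real.exp y := by rw [sq, ← Real.exp_add]; ring_nf
  rw [inv_eq_one_div, div_le_iff₀ h1]
  have : ((t + 2*t^2)/2 + 1)^2 * (1 - t) ≥ 1 := by nlinarith [sq_nonneg t, sq_nonneg (t*t), mul_nonneg h0 h0]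
  nlinarith [this, h6, h1.le]

lemma alower {s : ℝ} (h0 : 0 ≤ s) (h1 : s ≤ 1) : (1 + s)⁻¹ ≤ Real.exp (-s + s^2) := by
  have hq : 0 < 1 - s + s^2 := by nlinarith
  have hss : s - s^2 < 1 := by nlinarith
  have h := aexp_le_inv hss
  have h2 : (1 - (s - s^2))⁻¹ ≤ 1 + s := by
    rw [inv_eq_one_div, div_le_iff₀ (by nlinarith)]
    nlinarith
  have h3 : Real.exp (s - s^2) ≤ 1 + s := le_trans h h2
  have h4 : 0 < 1 + s := by linarith
  rw [inv_eq_one_div, div_le_iff₀ h4]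
  have : Real.exp (-s + s^2) = (Real.exp (s - s^2))⁻¹ := by
    rw [← Real.exp_neg]; ring_nf
  rw [this]
  calc (1:ℝ) = (Real.exp (s - s^2))⁻¹ * Real.exp (s - s^2) :=
        (inv_mul_cancel₀ (Real.exp_pos _).ne').symm
    _ ≤ (Real.exp (s - s^2))⁻¹ * (1 + s) :=
        mul_le_mul_of_nonneg_left h3 (by positivity)

lemma asummable_exp {a c : ℝ} (ha : 0 < a) (hc : 0 < c) :
    Summable fun k : ℕ => Real.exp (-(c * (k:ℝ) ^ a)) := by
  have hlog := (isLittleO_log_rpow_atTop ha).bound (show (0:ℝ) < c/2 by linarith)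
  have hev : ∀ᶠ x : ℝ in atTop, Real.exp (-(c * x ^ a)) ≤ x ^ (-2 : ℝ) := by
    filter_upwards [hlog, eventually_ge_atTop (1:ℝ)] with x hx hx1
    have hx0 : 0 < x := by linarith
    have hlogx : 0 ≤ Real.log x := Real.log_nonneg hx1
    have hxa : 0 ≤ x ^ a := Real.rpow_nonneg hx0.le a
    rw [Real.norm_eq_abs, Real.norm_eq_abs, abs_of_nonneg hlogx, abs_of_nonneg hxa] at hx
    have : -(c * x ^ a) ≤ Real.log x * (-2) := by nlinarith
    calc Real.exp (-(c * x ^ a)) ≤ Real.exp (Real.log x * (-2)) := Real.exp_le_exp.2 this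
    _ = x ^ (-2:ℝ) := (Real.rpow_def_of_pos hx0 _).symm
  obtain ⟨N, hN⟩ := (tendsto_natCast_atTop_atTop.eventually hev).exists_forall_of_atTop
  rw [← summable_nat_add_iff N]
  refine Summable.of_nonneg_of_le (fun k => (Real.exp_pos _).le) (fun k => hN (k + N) (Nat.le_add_left _ _)) ?_
  have : Summable (fun k : ℕ => ((k:ℝ)) ^ (-2:ℝ)) := Real.summable_nat_rpow.2 (by norm_num)
  exact (summable_nat_add_iff N).2 this


lemma a_ind (t : ℝ) : (fun x => gammaPDFReal 1 1 x * Real.exp (t * x))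
    = Set.indicator (Set.Ici (0:ℝ)) (fun x => Real.exp (-(1-t) * x)) := by
  funext x
  by_cases hx : (0:ℝ) ≤ x
  · simp only [gammaPDFReal, if_pos hx, Set.indicator_of_mem (Set.mem_Ici.2 hx),
      Real.Gamma_one, sub_self, Real.rpow_zero, Real.one_rpow]
    norm_num
    rw [← Real.exp_add]
    congr 1
    ring
  · simp [gammaPDFReal, if_neg hx, Set.indicator_of_notMem (fun h => hx (Set.mem_Ici.1 h))]

lemma a_intOn {t : ℝ} (ht : t < 1) :
    IntegrableOn (fun x => Real.exp (-(1-t) * x)) (Set.Ici (0:ℝ)) := by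
  rw [integrableOn_Ici_iff_integrableOn_Ioi]
  exact exp_neg_integrableOn_Ioi 0 (by linarith)

lemma a_hmu : expMeasure 1
    = (volume : Measure ℝ).withDensity (fun x => ((gammaPDFReal 1 1 x).toNNReal : ℝ≥0∞)) := by
  rfl

lemma a_smul_eq (t : ℝ) : (fun x => (gammaPDFReal 1 1 x).toNNReal • Real.exp (t * x))
    = fun x => gammaPDFReal 1 1 x * Real.exp (t * x) := by
  funext x
  simp only [NNReal.smul_def, smul_eq_mul]
  rw [Real.coe_toNNReal _ (gammaPDFReal_nonneg zero_lt_one zero_lt_one x)]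

lemma a_integrable {t : ℝ} (ht : t < 1) :
    Integrable (fun x => Real.exp (t * x)) (expMeasure 1) := by
  rw [a_hmu, integrable_withDensity_iff_integrable_smul
    ((measurable_gammaPDFReal 1 1).real_toNNReal)]
  rw [a_smul_eq, a_ind]
  rw [integrable_indicator_iff measurableSet_Ici]
  exact a_intOn ht

lemma a_integral {t : ℝ} (ht : t < 1) :
    ∫ x, Real.exp (t * x) ∂(expMeasure 1) = (1-t)⁻¹ := by
  have h1 : 0 < 1 - t := by linarith
  rw [a_hmu, integral_withDensity_eq_integral_smul ((measurable_gammaPDFReal 1 1).real_toNNReal)]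
  calc ∫ x, (gammaPDFReal 1 1 x).toNNReal • Real.exp (t * x)
      = ∫ x, Set.indicator (Set.Ici (0:ℝ)) (fun x => Real.exp (-(1-t) * x)) x := by
        rw [show (fun x => (gammaPDFReal 1 1 x).toNNReal • Real.exp (t * x)) = _ from (a_smul_eq t).trans (a_ind t)]
    _ = ∫ x in Set.Ici (0:ℝ), Real.exp (-(1-t) * x) := integral_indicator measurableSet_Ici
    _ = ∫ x in Set.Ioi (0:ℝ), Real.exp (-(1-t) * x) := integral_Ici_eq_integral_Ioi
    _ = (1-t)⁻¹ := by
        have h := integral_comp_mul_left_Ioi (fun x => Real.exp (-x)) 0 h1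
        simp only [mul_zero, integral_exp_neg_Ioi, neg_zero, Real.exp_zero, smul_eq_mul,
          mul_one] at h
        rw [show (fun x:ℝ => Real.exp (-(1-t) * x)) = fun x:ℝ => Real.exp (-((1-t) * x)) by
          funext x; ring_nf]
        rw [h]


lemma a_mvt {β K y z : ℝ} (hβ : 0 < β) (hK : 0 < K) (hy : K ≤ y) (hz : K ≤ z) :
    |y ^ (-β) - z ^ (-β)| ≤ β * K ^ (-β - 1) * |y - z| := by
  have hder : ∀ x ∈ Set.Ici K, HasDerivWithinAt (fun x : ℝ => x ^ (-β))
      ((fun x : ℝ => -β * x ^ (-β - 1)) x) (Set.Ici K) x := by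
    intro x hx
    have hx0 : 0 < x := lt_of_lt_of_le hK hx
    have := (Real.hasDerivAt_rpow_const (p := -β) (Or.inl hx0.ne')).hasDerivWithinAt
      (s := Set.Ici K)
    simpa [sub_eq_add_neg] using this
  have hbound : ∀ x ∈ Set.Ici K, ‖-β * x ^ (-β - 1)‖ ≤ β * K ^ (-β - 1) := by
    intro x hx
    have hx0 : 0 < x := lt_of_lt_of_le hK hx
    rw [norm_mul, Real.norm_eq_abs, Real.norm_eq_abs, abs_neg, abs_of_pos hβ,
      abs_of_nonneg (Real.rpow_nonneg hx0.le _)]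
    exact mul_le_mul_of_nonneg_left
      (Real.rpow_le_rpow_of_nonpos hK hx (by linarith)) hβ.le
  have h := (convex_Ici K).norm_image_sub_le_of_norm_hasDerivWithin_le hder hbound
    (Set.mem_Ici.2 hz) (Set.mem_Ici.2 hy)
  simpa [Real.norm_eq_abs] using h


lemma a_chernoff {Ω : Type*} [MeasureSpace Ω] [IsProbabilityMeasure (ℙ : Measure Ω)]
    (E : ℕ → Ω → ℝ) (hEmeas : ∀ i, Measurable (E i))
    (hEindep : iIndepFun E ℙ)
    (hEdist : ∀ i, Measure.map (E i) ℙ = expMeasure 1)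
    (Γ : ℕ → Ω → ℝ) (hΓ : ∀ k ω, Γ k ω = ∑ i ∈ Finset.range k, E i ω)
    {γ : ℝ} (hγh : 1/2 < γ) (hγ1 : γ ≤ 1) :
    ∀ᵐ ω ∂ℙ, ∀ᶠ k : ℕ in atTop, |Γ k ω - (k:ℝ)| < (k:ℝ) ^ γ := by
  have hG : ∀ k, Γ k = ∑ i ∈ Finset.range k, E i := fun k => funext fun ω => by
    rw [hΓ k ω, Finset.sum_apply]
  have hcont : ∀ t : ℝ, Continuous (fun x : ℝ => Real.exp (t * x)) := fun t =>
    Real.continuous_exp.comp (continuous_const.mul continuous_id)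
  have hintE : ∀ t : ℝ, t < 1 → ∀ i, Integrable (fun ω => Real.exp (t * E i ω)) ℙ := by
    intro t ht i
    have h1 : Integrable (fun x : ℝ => Real.exp (t * x)) (Measure.map (E i) ℙ) := by
      rw [hEdist i]; exact a_integrable ht
    exact (integrable_map_measure ((hcont t).aestronglyMeasurable)
      (hEmeas i).aemeasurable).1 h1
  have hmgfE : ∀ t : ℝ, t < 1 → ∀ i, mgf (E i) ℙ t = (1-t)⁻¹ := by
    intro t ht i
    have : mgf (E i) ℙ t = ∫ ω, Real.exp (t * E i ω) ∂ℙ := rfl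
    rw [this, ← integral_map (hEmeas i).aemeasurable ((hcont t).aestronglyMeasurable),
      hEdist i, a_integral ht]
  have hmgfΓ : ∀ t : ℝ, t < 1 → ∀ k, mgf (Γ k) ℙ t = ((1-t)⁻¹)^k := by
    intro t ht k
    rw [hG k, hEindep.mgf_sum hEmeas (Finset.range k),
      Finset.prod_congr rfl (fun i _ => hmgfE t ht i), Finset.prod_const, Finset.card_range]
  have hintΓ : ∀ t : ℝ, t < 1 → ∀ k, Integrable (fun ω => Real.exp (t * Γ k ω)) ℙ := by
    intro t ht k
    rw [hG k]
    exact hEindep.integrable_exp_mul_sum hEmeas (fun i _ => hintE t ht i)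
  set S : ℕ → Set Ω := fun k => {ω | (k:ℝ)^γ ≤ |Γ k ω - (k:ℝ)|} with hS
  have ha : 0 < 2*γ - 1 := by linarith
  have key : ∀ k : ℕ, ℙ (S k) ≤ ENNReal.ofReal (2 * Real.exp (-((1:ℝ)/8 * (k:ℝ)^(2*γ-1)))) := by
    intro k
    rcases Nat.eq_zero_or_pos k with hk0 | hk1
    · subst hk0
      have h0 : ((0:ℕ):ℝ) ^ (2*γ-1) = 0 := by
        rw [Nat.cast_zero, Real.zero_rpow ha.ne']
      rw [h0]
      simp only [mul_zero, neg_zero, Real.exp_zero, mul_one]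
      calc ℙ (S 0) ≤ 1 := prob_le_one
        _ ≤ ENNReal.ofReal 2 := by norm_num
    · have hkk1 : (1:ℝ) ≤ (k:ℝ) := by exact_mod_cast hk1
      set kk := (k:ℝ) with hkk
      have hkk0 : 0 < kk := by linarith
      set x := kk ^ γ with hx
      have hx0 : 0 < x := Real.rpow_pos_of_pos hkk0 γ
      have hxk : x ≤ kk := by
        calc kk ^ γ ≤ kk ^ (1:ℝ) := Real.rpow_le_rpow_of_exponent_le hkk1 hγ1
          _ = kk := Real.rpow_one kk
      have hxx : x^2 / (8*kk) = 1/8 * kk^(2*γ-1) := by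
        rw [sq, ← Real.rpow_add hkk0, show (2*γ-1) = γ+γ-1 by ring,
          Real.rpow_sub hkk0, Real.rpow_one]
        field_simp
      have hxx4 : x^2 / (4*kk) = 1/4 * kk^(2*γ-1) := by
        rw [sq, ← Real.rpow_add hkk0, show (2*γ-1) = γ+γ-1 by ring,
          Real.rpow_sub hkk0, Real.rpow_one]
        field_simp
      -- upper tail
      have hupper : (ℙ {ω | kk + x ≤ Γ k ω}).toReal ≤ Real.exp (-(1/8 * kk^(2*γ-1))) := by
        set t := x / (4*kk) with htdef
        have ht0 : 0 ≤ t := by positivity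
        have ht12 : t ≤ 1/2 := by
          rw [htdef, div_le_iff₀ (by positivity)]
          nlinarith
        have ht1 : t < 1 := by linarith
        have h1 := measure_ge_le_exp_mul_mgf (X := Γ k) (μ := ℙ) (kk + x) ht0 (hintΓ t ht1 k)
        rw [hmgfΓ t ht1 k] at h1
        have h2 : ((1-t)⁻¹)^k ≤ Real.exp ((k:ℝ) * (t + 2*t^2)) := by
          rw [Real.exp_nat_mul]
          exact pow_le_pow_left₀ (inv_nonneg.2 (by linarith)) (aupper ht0 ht12) k
        have h3 : Real.exp (-t * (kk+x)) * ((1-t)⁻¹)^k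
            ≤ Real.exp (-t * (kk+x) + kk * (t + 2*t^2)) := by
          rw [Real.exp_add]
          exact mul_le_mul_of_nonneg_left h2 (Real.exp_pos _).le
        have h4 : -t * (kk+x) + kk * (t + 2*t^2) = -(x^2/(8*kk)) := by
          rw [htdef]; field_simp; ring
        calc (ℙ {ω | kk + x ≤ Γ k ω}).toReal
            ≤ Real.exp (-t * (kk+x)) * ((1-t)⁻¹)^k := h1
          _ ≤ Real.exp (-t * (kk+x) + kk * (t + 2*t^2)) := h3
          _ = Real.exp (-(x^2/(8*kk))) := by rw [h4]
          _ = Real.exp (-(1/8 * kk^(2*γ-1))) := by rw [hxx]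
      -- lower tail
      have hlower : (ℙ {ω | Γ k ω ≤ kk - x}).toReal ≤ Real.exp (-(1/8 * kk^(2*γ-1))) := by
        set s := x / (2*kk) with hsdef
        have hs0 : 0 ≤ s := by positivity
        have hs1 : s ≤ 1 := by
          rw [hsdef, div_le_iff₀ (by positivity)]
          nlinarith
        have hs1' : (-s : ℝ) < 1 := by linarith
        have h1 := measure_le_le_exp_mul_mgf (X := Γ k) (μ := ℙ) (kk - x)
          (neg_nonpos.2 hs0) (hintΓ (-s) hs1' k)
        rw [hmgfΓ (-s) hs1' k] at h1
        have h2 : ((1-(-s))⁻¹)^k ≤ Real.exp ((k:ℝ) * (-s + s^2)) := by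
          rw [Real.exp_nat_mul]
          refine pow_le_pow_left₀ (inv_nonneg.2 (by linarith)) ?_ k
          rw [show (1:ℝ) - (-s) = 1 + s by ring]
          exact alower hs0 hs1
        have h3 : Real.exp (-(-s) * (kk-x)) * ((1-(-s))⁻¹)^k
            ≤ Real.exp (-(-s) * (kk-x) + kk * (-s + s^2)) := by
          rw [Real.exp_add]
          exact mul_le_mul_of_nonneg_left h2 (Real.exp_pos _).le
        have h4 : -(-s) * (kk-x) + kk * (-s + s^2) = -(x^2/(4*kk)) := by
          rw [hsdef]; field_simp; ring
        have h5 : Real.exp (-(x^2/(4*kk))) ≤ Real.exp (-(x^2/(8*kk))) := by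
          apply Real.exp_le_exp.2
          rw [neg_le_neg_iff]
          rw [div_le_div_iff₀ (by positivity) (by positivity)]
          nlinarith [sq_nonneg x, hkk0]
        calc (ℙ {ω | Γ k ω ≤ kk - x}).toReal
            ≤ Real.exp (-(-s) * (kk-x)) * ((1-(-s))⁻¹)^k := h1
          _ ≤ Real.exp (-(-s) * (kk-x) + kk * (-s + s^2)) := h3
          _ = Real.exp (-(x^2/(4*kk))) := by rw [h4]
          _ ≤ Real.exp (-(x^2/(8*kk))) := h5
          _ = Real.exp (-(1/8 * kk^(2*γ-1))) := by rw [hxx]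
      have hsub : S k ⊆ {ω | kk + x ≤ Γ k ω} ∪ {ω | Γ k ω ≤ kk - x} := by
        intro ω hω
        simp only [hS, Set.mem_setOf_eq] at hω
        rcases le_abs.1 hω with h | h
        · left; simp only [Set.mem_setOf_eq]; linarith
        · right; simp only [Set.mem_setOf_eq]; linarith
      have hle1 : ℙ {ω | kk + x ≤ Γ k ω} ≤ ENNReal.ofReal (Real.exp (-(1/8 * kk^(2*γ-1)))) :=
        (ENNReal.le_ofReal_iff_toReal_le (measure_ne_top _ _) (Real.exp_pos _).le).2 hupper
      have hle2 : ℙ {ω | Γ k ω ≤ kk - x} ≤ ENNReal.ofReal (Real.exp (-(1/8 * kk^(2*γ-1)))) :=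
        (ENNReal.le_ofReal_iff_toReal_le (measure_ne_top _ _) (Real.exp_pos _).le).2 hlower
      calc ℙ (S k) ≤ ℙ ({ω | kk + x ≤ Γ k ω} ∪ {ω | Γ k ω ≤ kk - x}) := measure_mono hsub
        _ ≤ ℙ {ω | kk + x ≤ Γ k ω} + ℙ {ω | Γ k ω ≤ kk - x} := measure_union_le _ _
        _ ≤ ENNReal.ofReal (Real.exp (-(1/8 * kk^(2*γ-1))))
            + ENNReal.ofReal (Real.exp (-(1/8 * kk^(2*γ-1)))) := add_le_add hle1 hle2
        _ = ENNReal.ofReal (2 * Real.exp (-(1/8 * kk^(2*γ-1)))) := by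
            rw [← ENNReal.ofReal_add (Real.exp_pos _).le (Real.exp_pos _).le]
            ring_nf
  have hsumm : Summable (fun k : ℕ => 2 * Real.exp (-((1:ℝ)/8 * (k:ℝ)^(2*γ-1)))) :=
    (asummable_exp ha (by norm_num : (0:ℝ) < 1/8)).mul_left 2
  have htsum : (∑' k, ℙ (S k)) ≠ ⊤ := by
    apply ne_top_of_le_ne_top _ (ENNReal.tsum_le_tsum key)
    rw [← ENNReal.ofReal_tsum_of_nonneg (fun k => by positivity) hsumm]
    exact ENNReal.ofReal_ne_top
  filter_upwards [ae_eventually_notMem htsum] with ω hω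
  refine hω.mono fun k hk => ?_
  simpa [hS, not_le] using hk


lemma a_det {β γ : ℝ} (hβ : 1/2 < β) (hγh : 1/2 < γ) (hγβ : γ < β) (hγ1 : γ < 1)
    (G : ℕ → ℝ) (hev : ∀ᶠ k : ℕ in atTop, |G k - (k:ℝ)| < (k:ℝ)^γ) :
    Summable (fun k : ℕ => |G (k+1) ^ (-β) - ((k:ℝ)+1) ^ (-β)|) := by
  have hβ0 : 0 < β := by linarith
  have h2 : ∀ᶠ x : ℝ in atTop, x ^ (γ-1) < 1/2 := by
    have := (tendsto_rpow_neg_atTop (by linarith : (0:ℝ) < 1-γ)).eventually_lt_const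
      (by norm_num : (0:ℝ) < 1/2)
    simpa [show -(1-γ) = γ-1 by ring] using this
  have h2' : ∀ᶠ k : ℕ in atTop, ((k:ℝ)) ^ (γ-1) < 1/2 :=
    tendsto_natCast_atTop_atTop.eventually h2
  obtain ⟨N, hN⟩ := (h2'.and (hev.and (eventually_ge_atTop 1))).exists_forall_of_atTop
  have key : ∀ k, N ≤ k →
      |G k ^ (-β) - (k:ℝ) ^ (-β)| ≤ (β * (2:ℝ)^(β+1)) * (k:ℝ)^(γ-β-1) := by
    intro k hk
    obtain ⟨ha2, ha1, hk1⟩ := hN k hk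
    set kk := (k:ℝ) with hkkdef
    have hkk1 : (1:ℝ) ≤ kk := by rw [hkkdef]; exact_mod_cast hk1
    have hkk0 : 0 < kk := by linarith
    have hsplit : kk ^ γ = kk ^ (γ-1) * kk := by
      rw [show γ = (γ-1) + 1 by ring, Real.rpow_add hkk0, Real.rpow_one]
      ring_nf
    have hxhalf : kk ^ γ ≤ kk/2 := by
      rw [hsplit]
      calc kk ^ (γ-1) * kk ≤ (1/2) * kk :=
            mul_le_mul_of_nonneg_right ha2.le hkk0.le
        _ = kk/2 := by ring
    have habs := abs_lt.1 ha1
    have hyK : kk/2 ≤ G k := by linarith [habs.1]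
    have hzK : kk/2 ≤ kk := by linarith
    have hKpos : 0 < kk/2 := by linarith
    have h1 := a_mvt hβ0 hKpos hyK hzK
    have e1 : (kk/2) ^ (-β-1) = kk^(-β-1) * (2:ℝ)^(β+1) := by
      rw [Real.div_rpow hkk0.le (by norm_num : (0:ℝ) ≤ 2),
        show (-β-1) = -(β+1) by ring, Real.rpow_neg (by norm_num : (0:ℝ) ≤ 2)]
      field_simp
    have e2 : kk^(-(β+1)) * kk^γ = kk^(γ-β-1) := by
      rw [← Real.rpow_add hkk0]
      ring_nf
    calc |G k ^ (-β) - kk ^ (-β)| ≤ β * (kk/2) ^ (-β-1) * |G k - kk| := h1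
      _ ≤ β * (kk/2) ^ (-β-1) * kk^γ := by
          apply mul_le_mul_of_nonneg_left (le_of_lt ha1)
          positivity
      _ = (β * (2:ℝ)^(β+1)) * (kk^(-(β+1)) * kk^γ) := by
          rw [e1, show (-β-1) = -(β+1) by ring]; ring
      _ = (β * (2:ℝ)^(β+1)) * kk^(γ-β-1) := by rw [e2]
  have hg : Summable (fun k : ℕ => (β * (2:ℝ)^(β+1)) * (k:ℝ)^(γ-β-1)) :=
    (Real.summable_nat_rpow.2 (by linarith)).mul_left _
  have hT : Summable (fun k : ℕ => |G k ^ (-β) - (k:ℝ) ^ (-β)|) := by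
    rw [← summable_nat_add_iff N]
    refine Summable.of_nonneg_of_le (fun k => abs_nonneg _)
      (fun k => key (k + N) (Nat.le_add_left _ _)) ?_
    exact (summable_nat_add_iff N).2 hg
  have := (summable_nat_add_iff 1).2 hT
  refine this.congr fun k => ?_
  push_cast
  rfl

set_option maxHeartbeats 1000000 in
/-- Lemma A.2: almost surely,
`∑_{k≥1} ∑_{j≠0} |c_j (Γ_k^{-1/α} - k^{-1/α}) g(Z_{k,j})| < ∞`
when `g` is bounded, the `c_j` decay geometrically, and `Γ_k` are partial
sums of i.i.d. mean-one exponentials. -/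
theorem stmt_1
    {Ω : Type*} [MeasureSpace Ω] [IsProbabilityMeasure (ℙ : Measure Ω)]
    (α M C D : ℝ) (hα0 : 0 < α) (hα2 : α < 2) (hM : 0 ≤ M)
    (hC : 0 ≤ C) (hD0 : 0 < D) (hD1 : D < 1)
    (g : ℝ → ℝ) (hg : ∀ z : ℝ, |g z| ≤ M)
    (c : ℤ → ℝ) (hc : ∀ j : ℤ, |c j| ≤ C * D ^ j.natAbs)
    (E : ℕ → Ω → ℝ) (hEmeas : ∀ i, Measurable (E i))
    (hEindep : iIndepFun E ℙ)
    (hEdist : ∀ i, Measure.map (E i) ℙ = expMeasure 1)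
    (Γ : ℕ → Ω → ℝ) (hΓ : ∀ k ω, Γ k ω = ∑ i ∈ Finset.range k, E i ω)
    (Z : ℕ → {j : ℤ // j ≠ 0} → Ω → ℝ) :
    ∀ᵐ ω ∂ℙ, Summable (fun p : ℕ × {j : ℤ // j ≠ 0} =>
      |c p.2 * ((Γ (p.1 + 1) ω) ^ (-(1 / α)) - ((p.1 : ℝ) + 1) ^ (-(1 / α))) *
        g (Z (p.1 + 1) p.2 ω)|) := by
  have hβ : 1/2 < 1/α := by rw [lt_div_iff₀ hα0]; linarith
  set b := min (1/α) 1 with hbdef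
  set γ := (1/2 + b)/2 with hγdef
  have hb : 1/2 < b := lt_min hβ (by norm_num)
  have hb1 : b ≤ 1 := min_le_right _ _
  have hbβ : b ≤ 1/α := min_le_left _ _
  have hγh : 1/2 < γ := by rw [hγdef]; linarith
  have hγ1 : γ < 1 := by rw [hγdef]; linarith
  have hγβ : γ < 1/α := by rw [hγdef]; linarith
  have hae := a_chernoff E hEmeas hEindep hEdist Γ hΓ hγh hγ1.le
  filter_upwards [hae] with ω hω
  have hT : Summable (fun k : ℕ =>
      |(Γ (k+1) ω) ^ (-(1/α)) - ((k:ℝ)+1) ^ (-(1/α))|) :=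
    a_det hβ hγh hγβ hγ1 (fun k => Γ k ω) hω
  have hDsum : Summable (fun j : ℤ => D ^ j.natAbs) := by
    apply Summable.of_nat_of_neg
    · simpa using summable_geometric_of_lt_one hD0.le hD1
    · simpa using summable_geometric_of_lt_one hD0.le hD1
  have hsub : Summable (fun j : {j : ℤ // j ≠ 0} => C * M * D ^ ((j:ℤ).natAbs)) :=
    (hDsum.comp_injective Subtype.val_injective).mul_left (C*M)
  have hprod : Summable (fun p : ℕ × {j : ℤ // j ≠ 0} =>
      |(Γ (p.1+1) ω) ^ (-(1/α)) - ((p.1:ℝ)+1) ^ (-(1/α))|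
        * (C * M * D ^ ((p.2:ℤ).natAbs))) :=
    hT.mul_of_nonneg hsub (fun k => abs_nonneg _) (fun j => by positivity)
  refine Summable.of_nonneg_of_le (fun p => abs_nonneg _) (fun p => ?_) hprod
  have h1 : |c (p.2:ℤ)| ≤ C * D ^ ((p.2:ℤ)).natAbs := hc _
  have h2 : |g (Z (p.1+1) p.2 ω)| ≤ M := hg _
  set Δ := (Γ (p.1+1) ω) ^ (-(1/α)) - ((p.1:ℝ)+1) ^ (-(1/α)) with hΔ
  have hDpow : (0:ℝ) ≤ C * D ^ ((p.2:ℤ)).natAbs := by positivity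
  calc |c (p.2:ℤ) * Δ * g (Z (p.1+1) p.2 ω)|
      = |c (p.2:ℤ)| * |Δ| * |g (Z (p.1+1) p.2 ω)| := by rw [abs_mul, abs_mul]
    _ ≤ (C * D ^ ((p.2:ℤ)).natAbs) * |Δ| * M := by
        apply mul_le_mul _ h2 (abs_nonneg _) (by positivity)
        exact mul_le_mul_of_nonneg_right h1 (abs_nonneg _)
    _ = |Δ| * (C * M * D ^ ((p.2:ℤ)).natAbs) := by ring
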